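/- Let p ∈ (0, 3). Then the integral ∬_{B_1 × S^1} ((x·u)² + 1 − |x|²)^{−p/2} dx du over the unit disk B_1 ⊂ R^2 and the unit circle S^1 is finite. Equivalently, the reciprocal chord-length function 1/L(x,u) with L = 2√((x·u)² + 1 − |x|²) is in L^p(B_1 × S^1) for all p < 3. -/

import Mathlib

open MeasureTheory Metric Set ENNReal

lemma measurable_rpow_const' (c : ℝ) : Measurable fun x : ℝ => x ^ c := by
  have hrw : (fun x : ℝ => x ^ c) = fun x =>
      if x = 0 then (if c = 0 then 1 else 0)
      else Real.exp (Real.log x * c) * (if x < 0 then Real.cos (c * Real.pi) else 1) := by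
    funext x
    rcases lt_trichotomy x 0 with h | h | h
    · rw [if_neg h.ne, if_pos h, Real.rpow_def_of_neg h, mul_comm c Real.pi]
    · subst h
      rcases eq_or_ne c 0 with hc | hc
      · simp [hc]
      · simp [hc, Real.zero_rpow hc]
    · rw [if_neg h.ne', if_neg (not_lt.mpr h.le), Real.rpow_def_of_pos h, mul_one]
  rw [hrw]
  refine Measurable.ite (measurableSet_eq_fun measurable_id measurable_const)
    measurable_const ?_
  exact ((Real.measurable_log.mul measurable_const).exp).mul
    (Measurable.ite measurableSet_Iio measurable_const measurable_const)

lemma aux_integrableOn {α : ℝ} (hα : -1 < α) :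
    IntegrableOn (fun b : ℝ => 2 * (1 + ((1 + b) ^ α + (1 - b) ^ α))) (Ioo (-1 : ℝ) 1) := by
  have h1 : IntervalIntegrable (fun x : ℝ => x ^ α) volume 0 2 :=
    intervalIntegral.intervalIntegrable_rpow' hα
  have h2 : IntervalIntegrable (fun x : ℝ => (1 - x) ^ α) volume (-1) 1 := by
    have := h1.comp_sub_left 1
    norm_num at this
    exact this.symm
  have h3 : IntervalIntegrable (fun x : ℝ => (1 + x) ^ α) volume (-1) 1 := by
    have := h1.comp_add_left 1
    norm_num at this
    exact this
  have h4 : IntervalIntegrable (fun x : ℝ => 2 * (1 + ((1 + x) ^ α + (1 - x) ^ α)))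
      volume (-1) 1 := ((intervalIntegrable_const).add (h3.add h2)).const_mul 2
  exact h4.1.mono_set Ioo_subset_Ioc_self

lemma aux_bound {α : ℝ} (b : ℝ) (hb : b ∈ Ioo (-1:ℝ) 1) :
    (1 - b ^ 2) ^ α ≤ 1 + ((1 + b) ^ α + (1 - b) ^ α) := by
  obtain ⟨hb1, hb2⟩ := hb
  have h1 : (0:ℝ) < 1 + b := by linarith
  have h2 : (0:ℝ) < 1 - b := by linarith
  have hfact : 1 - b ^ 2 = (1 + b) * (1 - b) := by ring
  have hpos : (0:ℝ) < 1 - b ^ 2 := by nlinarith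
  have hA := Real.rpow_nonneg h1.le α
  have hB := Real.rpow_nonneg h2.le α
  rcases le_or_gt 0 α with hα | hα
  · have : (1 - b ^ 2) ^ α ≤ 1 := Real.rpow_le_one hpos.le (by nlinarith) hα
    linarith
  · rw [hfact, Real.mul_rpow h1.le h2.le]
    rcases le_or_gt 0 b with hb0 | hb0
    · have hle : (1 + b) ^ α ≤ 1 :=
        Real.rpow_le_one_of_one_le_of_nonpos (by linarith) hα.le
      nlinarith
    · have hle : (1 - b) ^ α ≤ 1 :=
        Real.rpow_le_one_of_one_le_of_nonpos (by linarith) hα.le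
      nlinarith

lemma aux_lintegral_1d {c : ℝ} (hc : -(3/2 : ℝ) < c) :
    ∫⁻ b in Ioo (-1:ℝ) 1,
      ENNReal.ofReal ((1 - b ^ 2) ^ c * (2 * Real.sqrt (1 - b ^ 2))) < ⊤ := by
  set α := c + 1/2 with hαdef
  have hα : -1 < α := by rw [hαdef]; linarith
  have hmeas : Measurable fun b : ℝ => 2 * (1 + ((1 + b) ^ α + (1 - b) ^ α)) := by
    fun_prop
  calc ∫⁻ b in Ioo (-1:ℝ) 1,
        ENNReal.ofReal ((1 - b ^ 2) ^ c * (2 * Real.sqrt (1 - b ^ 2)))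
      ≤ ∫⁻ b in Ioo (-1:ℝ) 1,
        ENNReal.ofReal (2 * (1 + ((1 + b) ^ α + (1 - b) ^ α))) := by
        refine setLIntegral_mono hmeas.ennreal_ofReal fun b hb => ?_
        refine ENNReal.ofReal_le_ofReal ?_
        obtain ⟨hb1, hb2⟩ := hb
        have hpos : (0:ℝ) < 1 - b ^ 2 := by nlinarith
        have heq : (1 - b ^ 2) ^ c * (2 * Real.sqrt (1 - b ^ 2))
            = 2 * (1 - b ^ 2) ^ α := by
          rw [Real.sqrt_eq_rpow, hαdef]
          rw [show (1:ℝ)/(2:ℝ) = 2⁻¹ by norm_num] at *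
          rw [mul_comm ((1 - b ^ 2) ^ c), mul_assoc, ← Real.rpow_add hpos, add_comm]
        rw [heq]
        have := aux_bound (α := α) b ⟨hb1, hb2⟩
        linarith
    _ < ⊤ := (aux_integrableOn hα).lintegral_lt_top

lemma aux_K (p : ℝ) (hp3 : p < 3) :
    ∫⁻ y in ball (0 : EuclideanSpace ℝ (Fin 2)) 1,
      ENNReal.ofReal ((y 0 ^ 2 + 1 - ‖y‖ ^ 2) ^ (-(p / 2))) < ⊤ := by
  set c := -(p / 2) with hcdef
  have hc : -(3/2 : ℝ) < c := by rw [hcdef]; linarith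
  set f : EuclideanSpace ℝ (Fin 2) → ℝ≥0∞ :=
    fun y => ENNReal.ofReal ((y 0 ^ 2 + 1 - ‖y‖ ^ 2) ^ c) with hfdef
  let ψ : ℝ × ℝ ≃ᵐ EuclideanSpace ℝ (Fin 2) :=
    (MeasurableEquiv.finTwoArrow).symm.trans (MeasurableEquiv.toLp 2 (Fin 2 → ℝ))
  have hψ : MeasurePreserving ψ volume volume := by
    have h1 : MeasurePreserving (MeasurableEquiv.finTwoArrow (α := ℝ)).symm volume volume :=
      (volume_preserving_finTwoArrow ℝ).symm
    have h2 : MeasurePreserving (MeasurableEquiv.toLp 2 (Fin 2 → ℝ)) volume volume :=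
      (EuclideanSpace.volume_preserving_symm_measurableEquiv_toLp (Fin 2)).symm
    exact h2.comp h1
  have happ0 : ∀ z : ℝ × ℝ, ψ z 0 = z.1 := fun z => rfl
  have happ1 : ∀ z : ℝ × ℝ, ψ z 1 = z.2 := fun z => rfl
  have hnorm : ∀ z : ℝ × ℝ, ‖ψ z‖ ^ 2 = z.1 ^ 2 + z.2 ^ 2 := by
    intro z
    rw [EuclideanSpace.norm_eq, Real.sq_sqrt (by positivity)]
    simp [Fin.sum_univ_two, happ0 z, happ1 z, sq_abs]
  have hpre : ψ ⁻¹' (ball (0 : EuclideanSpace ℝ (Fin 2)) 1)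
      = {z : ℝ × ℝ | z.1 ^ 2 + z.2 ^ 2 < 1} := by
    ext z
    simp only [mem_preimage, mem_ball_zero_iff, mem_setOf_eq]
    rw [← hnorm z]
    constructor
    · intro h; nlinarith [norm_nonneg (ψ z)]
    · intro h; nlinarith [norm_nonneg (ψ z)]
  have key := hψ.setLIntegral_comp_preimage_emb ψ.measurableEmbedding f
    (ball (0 : EuclideanSpace ℝ (Fin 2)) 1)
  rw [← key, hpre]
  have hfg : ∀ z : ℝ × ℝ, f (ψ z) = ENNReal.ofReal ((1 - z.2 ^ 2) ^ c) := by
    intro z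
    rw [hfdef]
    simp only [happ0 z]
    rw [hnorm z]
    ring_nf
  calc ∫⁻ z in {z : ℝ × ℝ | z.1 ^ 2 + z.2 ^ 2 < 1}, f (ψ z)
      = ∫⁻ z in {z : ℝ × ℝ | z.1 ^ 2 + z.2 ^ 2 < 1},
          ENNReal.ofReal ((1 - z.2 ^ 2) ^ c) := by
        exact lintegral_congr fun z => hfg z
    _ < ⊤ := by
        have hS : MeasurableSet {z : ℝ × ℝ | z.1 ^ 2 + z.2 ^ 2 < 1} :=
          measurableSet_lt (by fun_prop) measurable_const
        rw [← lintegral_indicator hS, Measure.volume_eq_prod]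
        have hgm : Measurable fun z : ℝ × ℝ =>
            {z : ℝ × ℝ | z.1 ^ 2 + z.2 ^ 2 < 1}.indicator
              (fun z => ENNReal.ofReal ((1 - z.2 ^ 2) ^ c)) z := by
          exact Measurable.indicator (by fun_prop) hS
        rw [lintegral_prod_symm _ hgm.aemeasurable]
        have hinner : ∀ b : ℝ,
            (∫⁻ a, {z : ℝ × ℝ | z.1 ^ 2 + z.2 ^ 2 < 1}.indicator
              (fun z => ENNReal.ofReal ((1 - z.2 ^ 2) ^ c)) (a, b))
            = (Ioo (-1:ℝ) 1).indicator
                (fun b => ENNReal.ofReal ((1 - b ^ 2) ^ c * (2 * Real.sqrt (1 - b ^ 2)))) b := by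
          intro b
          have hset : ∀ a : ℝ, {z : ℝ × ℝ | z.1 ^ 2 + z.2 ^ 2 < 1}.indicator
              (fun z => ENNReal.ofReal ((1 - z.2 ^ 2) ^ c)) (a, b)
              = {a : ℝ | a ^ 2 < 1 - b ^ 2}.indicator
                  (fun _ => ENNReal.ofReal ((1 - b ^ 2) ^ c)) a := by
            intro a
            by_cases h : a ^ 2 + b ^ 2 < 1
            · have h' : a ^ 2 < 1 - b ^ 2 := by linarith
              simp only [Set.indicator_apply, mem_setOf_eq, if_pos h, if_pos h']
            · have h' : ¬ a ^ 2 < 1 - b ^ 2 := fun h' => h (by linarith)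
              simp only [Set.indicator_apply, mem_setOf_eq, if_neg h, if_neg h']
          simp only [hset]
          have hsetm : MeasurableSet {a : ℝ | a ^ 2 < 1 - b ^ 2} :=
            measurableSet_lt (by fun_prop) measurable_const
          rw [lintegral_indicator_const hsetm]
          by_cases hb : b ∈ Ioo (-1:ℝ) 1
          · obtain ⟨hb1, hb2⟩ := hb
            have hpos : (0:ℝ) < 1 - b ^ 2 := by nlinarith
            have hIoo : {a : ℝ | a ^ 2 < 1 - b ^ 2}
                = Ioo (-Real.sqrt (1 - b ^ 2)) (Real.sqrt (1 - b ^ 2)) := by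
              ext a
              simp only [mem_setOf_eq, mem_Ioo, ← abs_lt]
              rw [← Real.sqrt_sq_eq_abs, Real.sqrt_lt_sqrt_iff (by positivity)]
            rw [hIoo, Real.volume_Ioo,
              Set.indicator_of_mem (show b ∈ Ioo (-1:ℝ) 1 from ⟨hb1, hb2⟩),
              ENNReal.ofReal_mul (Real.rpow_nonneg hpos.le c)]
            congr 1
            rw [sub_neg_eq_add]
            ring_nf
          · have hb' : 1 ≤ b ^ 2 := by
              simp only [mem_Ioo, not_and_or, not_lt] at hb
              rcases hb with h | h
              · nlinarith
              · nlinarith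
            have hempty : {a : ℝ | a ^ 2 < 1 - b ^ 2} = ∅ := by
              ext a; simp only [mem_setOf_eq, mem_empty_iff_false, iff_false, not_lt]
              nlinarith [sq_nonneg a]
            rw [hempty, Set.indicator_of_notMem hb]
            simp
        calc ∫⁻ b, ∫⁻ a, {z : ℝ × ℝ | z.1 ^ 2 + z.2 ^ 2 < 1}.indicator
              (fun z => ENNReal.ofReal ((1 - z.2 ^ 2) ^ c)) (a, b)
            = ∫⁻ b, (Ioo (-1:ℝ) 1).indicator
                (fun b => ENNReal.ofReal
                  ((1 - b ^ 2) ^ c * (2 * Real.sqrt (1 - b ^ 2)))) b :=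
              lintegral_congr hinner
          _ = ∫⁻ b in Ioo (-1:ℝ) 1,
                ENNReal.ofReal ((1 - b ^ 2) ^ c * (2 * Real.sqrt (1 - b ^ 2))) :=
              lintegral_indicator measurableSet_Ioo _
          _ < ⊤ := aux_lintegral_1d hc

/-- The reciprocal chord-length function `1/L`, with `L = 2√((x·u)² + 1 - |x|²)`, is in
`L^p(B₁ × S¹)` for every `p < 3`: the integral
`∬_{B₁×S¹} ((x·u)² + 1 - |x|²)^{-p/2} dx du` is finite. The unit circle carries its
arclength measure (the surface measure `volume.toSphere`). -/
theorem inv_chord_length_integrable (p : ℝ) (hp0 : 0 < p) (hp3 : p < 3) :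
    Integrable
      (fun q : EuclideanSpace ℝ (Fin 2) × sphere (0 : EuclideanSpace ℝ (Fin 2)) 1 =>
        ((inner ℝ q.1 (q.2 : EuclideanSpace ℝ (Fin 2)) : ℝ) ^ 2 + 1 - ‖q.1‖ ^ 2) ^ (-(p / 2)))
      ((volume.restrict (ball (0 : EuclideanSpace ℝ (Fin 2)) 1)).prod
        (volume : Measure (EuclideanSpace ℝ (Fin 2))).toSphere) := by
  set c := -(p / 2) with hcdef
  have hc : -(3/2 : ℝ) < c := by rw [hcdef]; linarith
  have hbase : Continuous fun q : EuclideanSpace ℝ (Fin 2) ×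
      sphere (0 : EuclideanSpace ℝ (Fin 2)) 1 =>
      ((inner ℝ q.1 (q.2 : EuclideanSpace ℝ (Fin 2)) : ℝ) ^ 2 + 1 - ‖q.1‖ ^ 2) := by
    have h1 : Continuous fun q : EuclideanSpace ℝ (Fin 2) ×
        sphere (0 : EuclideanSpace ℝ (Fin 2)) 1 =>
        (inner ℝ q.1 (q.2 : EuclideanSpace ℝ (Fin 2)) : ℝ) :=
      continuous_inner.comp (continuous_fst.prodMk (continuous_subtype_val.comp continuous_snd))
    fun_prop
  have hFm : Measurable fun q : EuclideanSpace ℝ (Fin 2) ×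
      sphere (0 : EuclideanSpace ℝ (Fin 2)) 1 =>
      ((inner ℝ q.1 (q.2 : EuclideanSpace ℝ (Fin 2)) : ℝ) ^ 2 + 1 - ‖q.1‖ ^ 2) ^ c :=
    (measurable_rpow_const' c).comp hbase.measurable
  refine ⟨hFm.aestronglyMeasurable, ?_⟩
  rw [hasFiniteIntegral_iff_norm]
  rw [lintegral_prod_symm _ (hFm.norm.ennreal_ofReal.aemeasurable)]
  have hinner : ∀ u : sphere (0 : EuclideanSpace ℝ (Fin 2)) 1,
      (∫⁻ x in ball (0 : EuclideanSpace ℝ (Fin 2)) 1,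
        ENNReal.ofReal ‖((inner ℝ x (u : EuclideanSpace ℝ (Fin 2)) : ℝ) ^ 2 + 1 - ‖x‖ ^ 2) ^ c‖)
      = ∫⁻ y in ball (0 : EuclideanSpace ℝ (Fin 2)) 1,
          ENNReal.ofReal ((y 0 ^ 2 + 1 - ‖y‖ ^ 2) ^ c) := by
    intro u
    have hu : ‖(u : EuclideanSpace ℝ (Fin 2))‖ = 1 := by
      have := u.2
      rwa [mem_sphere_iff_norm, sub_zero] at this
    have horth : Orthonormal ℝ (({0} : Set (Fin 2)).restrict
        (fun _ : Fin 2 => (u : EuclideanSpace ℝ (Fin 2)))) := by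
      constructor
      · intro i; exact hu
      · intro i j hij
        refine absurd (Subtype.ext ?_) hij
        have hi := i.2
        have hj := j.2
        simp only [mem_singleton_iff] at hi hj
        rw [hi, hj]
    obtain ⟨b, hb0⟩ := horth.exists_orthonormalBasis_extension_of_card_eq
      (by simp [finrank_euclideanSpace])
    have hu0 : b 0 = (u : EuclideanSpace ℝ (Fin 2)) := hb0 0 rfl
    have hTmp : MeasurePreserving b.repr.symm volume volume :=
      b.measurePreserving_repr_symm
    have hTemb : MeasurableEmbedding b.repr.symm :=
      b.repr.symm.toHomeomorph.measurableEmbedding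
    have hpre : ⇑b.repr.symm ⁻¹' ball (0 : EuclideanSpace ℝ (Fin 2)) 1
        = ball (0 : EuclideanSpace ℝ (Fin 2)) 1 := by
      ext y
      simp [mem_ball_zero_iff]
    have key := hTmp.setLIntegral_comp_preimage_emb hTemb
      (fun x => ENNReal.ofReal
        ‖((inner ℝ x (u : EuclideanSpace ℝ (Fin 2)) : ℝ) ^ 2 + 1 - ‖x‖ ^ 2) ^ c‖)
      (ball (0 : EuclideanSpace ℝ (Fin 2)) 1)
    rw [← key, hpre]
    refine setLIntegral_congr_fun measurableSet_ball (fun y hy => ?_)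
    have h1 : (inner ℝ (b.repr.symm y) (u : EuclideanSpace ℝ (Fin 2)) : ℝ) = y 0 := by
      rw [← hu0, ← OrthonormalBasis.repr_symm_single b 0,
        LinearIsometryEquiv.inner_map_map]
      simp [EuclideanSpace.inner_single_right]
    have h2 : ‖b.repr.symm y‖ = ‖y‖ := by simp
    have hy' : ‖y‖ < 1 := mem_ball_zero_iff.mp hy
    have hbpos : 0 < y 0 ^ 2 + 1 - ‖y‖ ^ 2 := by nlinarith [sq_nonneg (y 0), norm_nonneg y]
    rw [h1, h2, Real.norm_eq_abs, abs_of_nonneg (Real.rpow_nonneg hbpos.le c)]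
  calc ∫⁻ u, (∫⁻ x in ball (0 : EuclideanSpace ℝ (Fin 2)) 1,
        ENNReal.ofReal ‖((inner ℝ x (u : EuclideanSpace ℝ (Fin 2)) : ℝ) ^ 2 + 1 - ‖x‖ ^ 2) ^ c‖)
        ∂(volume : Measure (EuclideanSpace ℝ (Fin 2))).toSphere
      = ∫⁻ _u, (∫⁻ y in ball (0 : EuclideanSpace ℝ (Fin 2)) 1,
          ENNReal.ofReal ((y 0 ^ 2 + 1 - ‖y‖ ^ 2) ^ c))
          ∂(volume : Measure (EuclideanSpace ℝ (Fin 2))).toSphere :=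
        lintegral_congr hinner
    _ < ⊤ := by
        rw [lintegral_const]
        exact ENNReal.mul_lt_top (aux_K p hp3)
          (measure_lt_top (volume : Measure (EuclideanSpace ℝ (Fin 2))).toSphere univ)
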